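/- Let A, B be subsets of {1,…,n}, let P ⊆ {i ∈ A ∩ B : u_i > 2}, and set Q = {i ∈ A ∩ B : u_i > 2} \ P. Let y, z ∈ X with D(y,z) = (A Δ B) ∪ P. Then the number of w ∈ X with D(w,y) = A and D(w,z) = B equals ∏_{i∈P}(u_i − 2) · ∏_{i∈Q}(u_i − 1) (empty products equal 1). In particular this number is nonzero. -/
import Mathlib


open Finset

theorem stmt_2 {n : ℕ} (hn : 1 ≤ n) (U : Fin n → Type*) [∀ i, Fintype (U i)]
    [∀ i, DecidableEq (U i)] (u : Fin n → ℕ) (hu : ∀ i, Fintype.card (U i) = u i)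
    (h2 : ∀ i, 2 ≤ u i) (A B P Q : Finset (Fin n))
    (hP : P ⊆ (A ∩ B).filter (fun i => 2 < u i))
    (hQ : Q = (A ∩ B).filter (fun i => 2 < u i) \ P)
    (y z : ∀ i, U i)
    (hyz : univ.filter (fun i => y i ≠ z i) = symmDiff A B ∪ P) :
    ((univ : Finset (∀ i, U i)).filter
        (fun w => univ.filter (fun i => w i ≠ y i) = A ∧
          univ.filter (fun i => w i ≠ z i) = B)).card
      = (∏ i ∈ P, (u i - 2)) * ∏ i ∈ Q, (u i - 1) ∧
    0 < ((univ : Finset (∀ i, U i)).filter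
        (fun w => univ.filter (fun i => w i ≠ y i) = A ∧
          univ.filter (fun i => w i ≠ z i) = B)).card := by
  classical
  have hyz' : ∀ i, y i ≠ z i ↔ (i ∈ symmDiff A B ∨ i ∈ P) := by
    intro i
    rw [Finset.ext_iff] at hyz
    have := hyz i
    simpa using this
  have hPA : ∀ i ∈ P, i ∈ A ∧ i ∈ B ∧ 2 < u i := by
    intro i hi
    have := hP hi
    simp only [mem_filter, mem_inter] at this
    tauto
  set t : ∀ i, Finset (U i) := fun i =>
    univ.filter (fun a => (a ≠ y i ↔ i ∈ A) ∧ (a ≠ z i ↔ i ∈ B)) with ht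
  have hset : ((univ : Finset (∀ i, U i)).filter
        (fun w => univ.filter (fun i => w i ≠ y i) = A ∧
          univ.filter (fun i => w i ≠ z i) = B)) = Fintype.piFinset t := by
    ext w
    simp only [mem_filter, mem_univ, true_and, Fintype.mem_piFinset, ht,
      Finset.ext_iff]
    constructor
    · rintro ⟨h1, h2⟩ i
      have := h1 i; have := h2 i
      simp_all
    · intro h
      constructor <;> intro i <;> have := h i <;> simp_all
  have hcard : ∀ i, (t i).card =
      if i ∈ P then u i - 2 else if i ∈ A ∩ B then u i - 1 else 1 := by
    intro i
    by_cases hiP : i ∈ P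
    · obtain ⟨hiA, hiB, hiu⟩ := hPA i hiP
      have hne : y i ≠ z i := (hyz' i).mpr (Or.inr hiP)
      have : t i = ({y i, z i} : Finset (U i))ᶜ := by
        ext a
        simp [ht, hiA, hiB, and_comm]
      rw [this, card_compl, hu i, card_pair hne]
      simp [hiP]
    · by_cases hiAB : i ∈ A ∩ B
      · obtain ⟨hiA, hiB⟩ := mem_inter.mp hiAB
        have heq : y i = z i := by
          by_contra hne
          rcases (hyz' i).mp hne with h | h
          · rw [Finset.mem_symmDiff] at h; tauto
          · exact hiP h
        have : t i = ({y i} : Finset (U i))ᶜ := by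
          ext a
          simp [ht, hiA, hiB, heq]
        rw [this, card_compl, hu i, card_singleton]
        simp [hiP, hiAB]
      · have hsym : (i ∈ A ∧ i ∉ B) ∨ (i ∈ B ∧ i ∉ A) ∨ (i ∉ A ∧ i ∉ B) := by
          rw [mem_inter] at hiAB; tauto
        rcases hsym with ⟨hiA, hiB⟩ | ⟨hiB, hiA⟩ | ⟨hiA, hiB⟩
        · have hne : y i ≠ z i := (hyz' i).mpr
            (Or.inl (Finset.mem_symmDiff.mpr (Or.inl ⟨hiA, hiB⟩)))
          have : t i = {z i} := by
            ext a
            simp only [ht, mem_filter, mem_univ, true_and, mem_singleton,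
              hiA, hiB, iff_true, iff_false, not_not]
            constructor
            · rintro ⟨-, h⟩; exact h
            · rintro rfl; exact ⟨Ne.symm hne, rfl⟩
          rw [this, card_singleton]
          simp [hiP, hiAB]
        · have hne : y i ≠ z i := (hyz' i).mpr
            (Or.inl (Finset.mem_symmDiff.mpr (Or.inr ⟨hiB, hiA⟩)))
          have : t i = {y i} := by
            ext a
            simp only [ht, mem_filter, mem_univ, true_and, mem_singleton,
              hiA, hiB, iff_true, iff_false, not_not]
            constructor
            · rintro ⟨h, -⟩; exact h
            · rintro rfl; exact ⟨rfl, hne⟩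
          rw [this, card_singleton]
          simp [hiP, hiAB]
        · have heq : y i = z i := by
            by_contra hne
            rcases (hyz' i).mp hne with h | h
            · rw [Finset.mem_symmDiff] at h; tauto
            · exact absurd (hPA i h).1 hiA
          have : t i = {y i} := by
            ext a
            simp only [ht, mem_filter, mem_univ, true_and, mem_singleton,
              hiA, hiB, iff_false, not_not, ← heq]
            tauto
          rw [this, card_singleton]
          simp [hiP, hiAB]
  have hPsub : P ⊆ A ∩ B := fun i hi => (mem_filter.mp (hP hi)).1
  have hprod : ((univ : Finset (∀ i, U i)).filter
        (fun w => univ.filter (fun i => w i ≠ y i) = A ∧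
          univ.filter (fun i => w i ≠ z i) = B)).card
      = (∏ i ∈ P, (u i - 2)) * ∏ i ∈ Q, (u i - 1) := by
    rw [hset, Fintype.card_piFinset]
    calc ∏ i, (t i).card
        = ∏ i ∈ A ∩ B, (t i).card := by
          apply (Finset.prod_subset (subset_univ _) _).symm
          intro i _ hi
          rw [hcard i, if_neg (fun h => hi (hPsub h)), if_neg hi]
      _ = (∏ i ∈ P, (t i).card) * ∏ i ∈ (A ∩ B) \ P, (t i).card := by
          rw [mul_comm, Finset.prod_sdiff hPsub]
      _ = (∏ i ∈ P, (u i - 2)) * ∏ i ∈ (A ∩ B) \ P, (u i - 1) := by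
          congr 1
          · exact Finset.prod_congr rfl fun i hi => by rw [hcard i, if_pos hi]
          · refine Finset.prod_congr rfl fun i hi => ?_
            rw [mem_sdiff] at hi
            rw [hcard i, if_neg hi.2, if_pos hi.1]
      _ = (∏ i ∈ P, (u i - 2)) * ∏ i ∈ Q, (u i - 1) := by
          congr 1
          apply (Finset.prod_subset _ _).symm
          · rw [hQ]
            intro i hi
            rw [mem_sdiff, mem_filter] at hi
            exact mem_sdiff.mpr ⟨hi.1.1, hi.2⟩
          · intro i hi hiQ
            rw [mem_sdiff] at hi
            rw [hQ, mem_sdiff, mem_filter] at hiQ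
            push_neg at hiQ
            have : u i ≤ 2 := by
              by_contra h
              push_neg at h
              exact hi.2 (hiQ ⟨hi.1, h⟩)
            have := h2 i
            omega
  refine ⟨hprod, ?_⟩
  rw [hprod]
  have p1 : ∀ i ∈ P, 0 < u i - 2 := by
    intro i hi
    exact Nat.sub_pos_of_lt (hPA i hi).2.2
  have p2 : ∀ i ∈ Q, 0 < u i - 1 := by
    intro i hi
    exact Nat.sub_pos_of_lt (lt_of_lt_of_le one_lt_two (h2 i))
  exact Nat.mul_pos (Finset.prod_pos p1) (Finset.prod_pos p2)
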